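/- Let L be a locally finite modular lattice with a least element ⊥ that contains at least one element different from ⊥. Let w be a projective-constant weighting on L all of whose values are positive, and let r be an integer such that (w, r) satisfies the differential condition on L. Then r > 0. -/

import Mathlib

open scoped BigOperators

/-- A weighting `w` on a lattice is projective-constant if it takes equal values on
cover-projective coverings. -/
def ProjConst {L : Type*} [Lattice L] (w : L → L → ℤ) : Prop :=
  ∀ x y : L, x ≠ y → x ⊓ y ⋖ x → x ⊓ y ⋖ y → x ⋖ x ⊔ y → y ⋖ x ⊔ y →
    w (x ⊓ y) x = w y (x ⊔ y) ∧ w (x ⊓ y) y = w x (x ⊔ y)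

/-- The pair `(w, r)` satisfies the differential condition on `L`: for every `x`,
the sets of lower and upper covers of `x` are finite and
`(∑_{y ⋖ x} w(y,x)) + r = ∑_{z : x ⋖ z} w(x,z)`. -/
def DiffCond {L : Type*} [Lattice L] (w : L → L → ℤ) (r : ℤ) : Prop :=
  ∀ x : L, {y | y ⋖ x}.Finite ∧ {z | x ⋖ z}.Finite ∧
    ((∑ᶠ y ∈ {y | y ⋖ x}, w y x) + r = ∑ᶠ z ∈ {z | x ⋖ z}, w x z)

/-- If `L` is a locally finite modular lattice with `⊥` having some element `≠ ⊥`,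
`w` is a projective-constant weighting with all values positive, and `(w, r)` satisfies
the differential condition, then `r > 0`. -/
theorem stmt0 {L : Type*} [Lattice L] [LocallyFiniteOrder L] [IsModularLattice L]
    [OrderBot L] (hnt : ∃ x : L, x ≠ ⊥)
    (w : L → L → ℤ) (hproj : ProjConst w)
    (hpos : ∀ x y : L, x ⋖ y → 0 < w x y)
    (r : ℤ) (hdiff : DiffCond w r) : 0 < r := by
  obtain ⟨x, hx⟩ := hnt
  have hbx : (⊥ : L) < x := bot_lt_iff_ne_bot.2 hx
  -- find a cover of ⊥
  have hfin : (Set.Ioc (⊥ : L) x).Finite := (Set.finite_Icc ⊥ x).subset Set.Ioc_subset_Icc_self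
  obtain ⟨a, ha, hamin⟩ : ∃ a ∈ Set.Ioc (⊥ : L) x, ∀ a' ∈ Set.Ioc (⊥ : L) x, id a' ≤ id a → id a = id a' := by
    obtain ⟨a, ha, hm⟩ := Set.Finite.exists_minimalFor id _ hfin ⟨x, hbx, le_rfl⟩
    exact ⟨a, ha, fun a' h1 h2 => le_antisymm (hm h1 h2) h2⟩
  have hcov : (⊥ : L) ⋖ a := by
    refine ⟨ha.1, fun c hc hca => ?_⟩
    have h := hamin c ⟨hc, hca.le.trans ha.2⟩ (le_of_lt hca)
    simp only [id] at h
    exact absurd hca (h ▸ lt_irrefl _)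
  obtain ⟨h1, h2, h3⟩ := hdiff (⊥ : L)
  have hempty : {y : L | y ⋖ ⊥} = ∅ := by
    ext y; simp only [Set.mem_setOf_eq, Set.mem_empty_iff_false, iff_false]
    exact fun h => (not_lt_bot h.lt)
  rw [hempty, finsum_mem_empty, zero_add] at h3
  rw [h3]
  have : {z : L | ⊥ ⋖ z} = (h2.toFinset : Set L) := by simp
  rw [this, finsum_mem_coe_finset]
  refine Finset.sum_pos (fun z hz => hpos _ _ ?_) ⟨a, ?_⟩
  · exact h2.mem_toFinset.1 hz
  · exact h2.mem_toFinset.2 hcov
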